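/- For a binary string p and 1 ≤ i ≤ |p|, write p_i for the i-th bit of p counted from the left, and set X(p) = {p} ∪ {p·0^i : 1 ≤ i ≤ |p|, p_i = 1}. Given a self-delimiting Turing machine C, there exists a tuatara machine V with dom(V) = ⋃_{p ∈ dom(C)} X(p) such that ζ_V = Ω_C; moreover dom(V) ⊇ dom(C), the sets X(p) for distinct p ∈ dom(C) are pairwise disjoint, X(p) has HW(p)+1 elements where HW(p) is the number of 1 bits of p, and for each p ∈ dom(C) one has ∑_{x ∈ X(p)} 1/bin⁻¹(x) = 2^{-|p|}. -/

import Mathlib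

open scoped ENNReal

/-- The domain of a Turing machine (a partial function on binary strings). -/
def dom (f : List Bool →. List Bool) : Set (List Bool) := {p | (f p).Dom}

/-- A machine is self-delimiting if its domain is prefix-free. -/
def SelfDelim (f : List Bool →. List Bool) : Prop :=
  ∀ p ∈ dom f, ∀ q ∈ dom f, p <+: q → p = q

/-- Chaitin's Omega number of a machine, in `[0,∞]`. -/
noncomputable def Omega (f : List Bool →. List Bool) : ℝ≥0∞ :=
  ∑' p : dom f, (2 : ℝ≥0∞)⁻¹ ^ (p : List Bool).length

/-- `bin n` is the binary expansion of `n` with the leading 1 removed. -/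
def bin (n : ℕ) : List Bool := (Nat.bits n).reverse.tail

/-- `Υ[A]`: the set of positive integers whose `bin`-code lies in `A`. -/
def Ups (A : Set (List Bool)) : Set ℕ := {n | 1 ≤ n ∧ bin n ∈ A}

/-- The zeta number of a machine, in `[0,∞]`. -/
noncomputable def zeta (f : List Bool →. List Bool) : ℝ≥0∞ :=
  ∑' n : Ups (dom f), ((n : ℕ) : ℝ≥0∞)⁻¹

/-- `U` is a universal self-delimiting Turing machine. -/
def UnivSD (U : List Bool →. List Bool) : Prop :=
  SelfDelim U ∧ ∀ C : List Bool →. List Bool, Partrec C → SelfDelim C →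
    ∃ c : ℕ, ∀ x ∈ dom C, ∃ p : List Bool, p.length ≤ x.length + c ∧ U p = C x

/-- `T` is a universal (plain) Turing machine. -/
def UnivTM (T : List Bool →. List Bool) : Prop :=
  ∀ C : List Bool →. List Bool, Partrec C →
    ∃ c : ℕ, ∀ x ∈ dom C, ∃ p : List Bool, p.length ≤ x.length + c ∧ T p = C x

/-- Program-size / plain complexity of a string w.r.t. a machine. -/
noncomputable def Cpx (f : List Bool →. List Bool) (y : List Bool) : ℕ :=
  sInf {n : ℕ | ∃ w : List Bool, w.length = n ∧ y ∈ f w}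

/-- Natural complexity of a string w.r.t. a machine, with `min ∅ = ∞`. -/
noncomputable def nabla (f : List Bool →. List Bool) (y : List Bool) : ℝ≥0∞ :=
  sInf {c : ℝ≥0∞ | ∃ n : ℕ, 1 ≤ n ∧ y ∈ f (bin n) ∧ c = (n : ℝ≥0∞)}

/-- The real number with binary digit sequence `x`. -/
noncomputable def realDigits (x : ℕ → Bool) : ℝ :=
  ∑' i : ℕ, (if x i then (1 : ℝ) else 0) * (2 : ℝ)⁻¹ ^ (i + 1)

/-- The extended nonnegative real with binary digit sequence `x`. -/
noncomputable def ennDigits (x : ℕ → Bool) : ℝ≥0∞ :=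
  ∑' i : ℕ, (if x i then (1 : ℝ≥0∞) else 0) * (2 : ℝ≥0∞)⁻¹ ^ (i + 1)

/-- The string of the first `m` digits of the sequence `x`. -/
def prefixStr (x : ℕ → Bool) (m : ℕ) : List Bool := (List.range m).map x

/-- A real is computable if it is approximated to within `2⁻ⁿ` by a computable
sequence of rationals. -/
def ComputableReal (s : ℝ) : Prop :=
  ∃ f : ℕ → ℚ, Computable f ∧ ∀ n : ℕ, |s - (f n : ℝ)| ≤ (2 : ℝ)⁻¹ ^ n

/-- `bin⁻¹(w)`: the natural number whose binary expansion is `1·w`. -/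
def binInv (w : List Bool) : ℕ := w.foldl (fun a b => 2 * a + cond b 1 0) 1

/-- `X(p) = {p} ∪ {p·0^i : 1 ≤ i ≤ |p|, p_i = 1}` where `p_i` is the `i`-th bit
of `p` counted from the left. -/
def Xset (p : List Bool) : Finset (List Bool) :=
  insert p
    (((Finset.Icc 1 p.length).filter (fun i => p.getD (i - 1) false = true)).image
      (fun i => p ++ List.replicate i false))


/-! ### Auxiliary lemmas -/

open Nat.Partrec (Code)
open Nat.Partrec.Code

lemma binInv_concat (w : List Bool) (b : Bool) :
    binInv (w ++ [b]) = 2 * binInv w + cond b 1 0 := by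
  simp [binInv, List.foldl_append]

lemma one_le_binInv (w : List Bool) : 1 ≤ binInv w := by
  induction w using List.reverseRecOn with
  | nil => simp [binInv]
  | append_singleton w b ih => rw [binInv_concat]; omega

lemma binInv_append_replicate (w : List Bool) (i : ℕ) :
    binInv (w ++ List.replicate i false) = 2 ^ i * binInv w := by
  induction i with
  | zero => simp
  | succ n ih =>
      rw [List.replicate_succ', ← List.append_assoc, binInv_concat, ih]
      simp [Bool.cond_false]; ring

lemma bits_binInv (w : List Bool) : (binInv w).bits = w.reverse ++ [true] := by
  induction w using List.reverseRecOn with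
  | nil => simp [binInv, Nat.one_bits]
  | append_singleton w b ih =>
      rw [binInv_concat]
      cases b with
      | false =>
          simp only [cond]
          rw [Nat.add_zero, Nat.bit0_bits _ (by have := one_le_binInv w; omega), ih]
          simp
      | true =>
          simp only [cond]
          rw [Nat.bit1_bits, ih]
          simp

lemma bin_binInv (w : List Bool) : bin (binInv w) = w := by
  simp [bin, bits_binInv]

lemma binInv_surj {n : ℕ} (h : 1 ≤ n) : ∃ w, binInv w = n := by
  induction n using Nat.strong_induction_on with
  | _ n ih =>
    rcases Nat.lt_or_ge n 2 with h2 | h2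
    · exact ⟨[], by interval_cases n; rfl⟩
    · have h1 : 1 ≤ n / 2 := by omega
      obtain ⟨w, hw⟩ := ih (n / 2) (by omega) h1
      refine ⟨w ++ [decide (n % 2 = 1)], ?_⟩
      rw [binInv_concat, hw]
      rcases Nat.even_or_odd n with he | ho
      · have : n % 2 = 0 := Nat.even_iff.mp he
        simp [this]; omega
      · have : n % 2 = 1 := Nat.odd_iff.mp ho
        simp [this]; omega

lemma binInv_bin {n : ℕ} (h : 1 ≤ n) : binInv (bin n) = n := by
  obtain ⟨w, rfl⟩ := binInv_surj h
  rw [bin_binInv]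

lemma binInv_spec (p : List Bool) :
    binInv p = 2 ^ p.length +
      ∑ i ∈ (Finset.Icc 1 p.length).filter (fun i => p.getD (i - 1) false = true),
        2 ^ (p.length - i) := by
  induction p using List.reverseRecOn with
  | nil => simp [binInv]
  | append_singleton p b ih =>
      have hlen : (p ++ [b]).length = p.length + 1 := by simp
      rw [binInv_concat, ih]
      have hgetD : ∀ i ∈ Finset.Icc 1 p.length,
          ((p ++ [b]).getD (i - 1) false = true) ↔ (p.getD (i - 1) false = true) := by
        intro i hi
        rw [Finset.mem_Icc] at hi
        rw [List.getD_append _ _ _ _ (by omega)]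
      have hb : (p ++ [b]).getD (p.length + 1 - 1) false = b := by
        simp [List.getD]
      have hsum : ∑ i ∈ (Finset.Icc 1 p.length).filter
            (fun i => p.getD (i - 1) false = true), 2 ^ (p.length + 1 - i)
          = 2 * ∑ i ∈ (Finset.Icc 1 p.length).filter
            (fun i => p.getD (i - 1) false = true), 2 ^ (p.length - i) := by
        rw [Finset.mul_sum]
        refine Finset.sum_congr rfl fun i hi => ?_
        rw [Finset.mem_filter, Finset.mem_Icc] at hi
        have : p.length + 1 - i = (p.length - i) + 1 := by omega
        rw [this, pow_succ]; ring
      have hins : Finset.Icc 1 (p.length + 1) = insert (p.length + 1) (Finset.Icc 1 p.length) := by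
        rw [Finset.insert_Icc_right_eq_Icc_add_one (by omega)]
      cases b with
      | false =>
          have hsplit : (Finset.Icc 1 (p ++ [false]).length).filter
                (fun i => (p ++ [false]).getD (i - 1) false = true)
              = (Finset.Icc 1 p.length).filter (fun i => p.getD (i - 1) false = true) := by
            rw [hlen, hins, Finset.filter_insert, if_neg (by simp_all), Finset.filter_congr hgetD]
          rw [hsplit, hlen, hsum]
          simp [pow_succ]; ring
      | true =>
          have hsplit : (Finset.Icc 1 (p ++ [true]).length).filter
                (fun i => (p ++ [true]).getD (i - 1) false = true)
              = insert (p.length + 1)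
                  ((Finset.Icc 1 p.length).filter (fun i => p.getD (i - 1) false = true)) := by
            rw [hlen, hins, Finset.filter_insert, if_pos (by simp_all), Finset.filter_congr hgetD]
          rw [hsplit, hlen,
            Finset.sum_insert (by simp only [Finset.mem_filter, Finset.mem_Icc]; omega),
            hsum, Nat.sub_self, pow_zero, pow_succ]
          simp only [Bool.cond_true]
          ring

lemma mem_Xset {x p : List Bool} :
    x ∈ Xset p ↔ ∃ i, x = p ++ List.replicate i false ∧
      (i = 0 ∨ (1 ≤ i ∧ i ≤ p.length ∧ p.getD (i - 1) false = true)) := by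
  simp only [Xset, Finset.mem_insert, Finset.mem_image, Finset.mem_filter, Finset.mem_Icc]
  constructor
  · rintro (rfl | ⟨i, ⟨⟨h1, h2⟩, h3⟩, rfl⟩)
    · exact ⟨0, by simp⟩
    · exact ⟨i, rfl, Or.inr ⟨h1, h2, h3⟩⟩
  · rintro ⟨i, rfl, (rfl | ⟨h1, h2, h3⟩)⟩
    · exact Or.inl (by simp)
    · exact Or.inr ⟨i, ⟨⟨h1, h2⟩, h3⟩, rfl⟩

lemma self_mem_Xset (p : List Bool) : p ∈ Xset p := Finset.mem_insert_self _ _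

lemma Xset_disjoint {p q : List Bool}
    (hpq : ¬ p <+: q) (hqp : ¬ q <+: p) : Disjoint (Xset p) (Xset q) := by
  rw [Finset.disjoint_left]
  intro x hx hx'
  obtain ⟨i, rfl, -⟩ := mem_Xset.mp hx
  obtain ⟨j, hj, -⟩ := mem_Xset.mp hx'
  have h1 : p <+: p ++ List.replicate i false := List.prefix_append _ _
  have h2 : q <+: p ++ List.replicate i false := by
    rw [hj]; exact List.prefix_append _ _
  rcases le_total p.length q.length with h | h
  · exact hpq (List.prefix_of_prefix_length_le h1 h2 h)
  · exact hqp (List.prefix_of_prefix_length_le h2 h1 h)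

lemma count_eq (p : List Bool) :
    ((Finset.Icc 1 p.length).filter (fun i => p.getD (i - 1) false = true)).card
      = p.count true := by
  induction p using List.reverseRecOn with
  | nil => simp
  | append_singleton p b ih =>
      have hlen : (p ++ [b]).length = p.length + 1 := by simp
      have hgetD : ∀ i ∈ Finset.Icc 1 p.length,
          ((p ++ [b]).getD (i - 1) false = true) ↔ (p.getD (i - 1) false = true) := by
        intro i hi
        rw [Finset.mem_Icc] at hi
        rw [List.getD_append _ _ _ _ (by omega)]
      have hb : (p ++ [b]).getD (p.length + 1 - 1) false = b := by
        simp [List.getD]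
      have hins : Finset.Icc 1 (p.length + 1) = insert (p.length + 1) (Finset.Icc 1 p.length) := by
        rw [Finset.insert_Icc_right_eq_Icc_add_one (by omega)]
      have hcnt : (p ++ [b]).count true = p.count true + (if b then 1 else 0) := by
        rw [List.count_append]
        cases b <;> simp
      rw [hlen, hins, Finset.filter_insert, Finset.filter_congr hgetD, hcnt]
      cases b with
      | false => rw [if_neg (by simp_all), ih]; simp
      | true =>
          rw [if_pos (by simp_all),
            Finset.card_insert_of_notMem (by simp only [Finset.mem_filter, Finset.mem_Icc]; omega),
            ih]
          simp

lemma Xset_card (p : List Bool) : (Xset p).card = p.count true + 1 := by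
  have hinj : Set.InjOn (fun i => p ++ List.replicate i false)
      ((Finset.Icc 1 p.length).filter (fun i => p.getD (i - 1) false = true)) := by
    intro i hi j hj h
    have := congrArg List.length h
    simpa using this
  rw [Xset, Finset.card_insert_of_notMem, Finset.card_image_of_injOn hinj, count_eq]
  intro hmem
  obtain ⟨i, hi, hx⟩ := Finset.mem_image.mp hmem
  rw [Finset.mem_filter, Finset.mem_Icc] at hi
  have := congrArg List.length hx
  simp at this
  omega

lemma Xsum (p : List Bool) :
    ∑ x ∈ Xset p, ((binInv x : ℝ≥0∞))⁻¹ = (2 : ℝ≥0∞)⁻¹ ^ p.length := by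
  classical
  set S := (Finset.Icc 1 p.length).filter (fun i => p.getD (i - 1) false = true) with hS
  have hinj : Set.InjOn (fun i => p ++ List.replicate i false) S := by
    intro i hi j hj h
    have := congrArg List.length h
    simpa using this
  have hnm : p ∉ S.image (fun i => p ++ List.replicate i false) := by
    intro hmem
    obtain ⟨i, hi, hx⟩ := Finset.mem_image.mp hmem
    rw [hS, Finset.mem_filter, Finset.mem_Icc] at hi
    have := congrArg List.length hx
    simp at this
    omega
  have hN1 : (binInv p : ℝ≥0∞) ≠ 0 := by
    simp only [ne_eq, Nat.cast_eq_zero]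
    have := one_le_binInv p; omega
  have hN2 : (binInv p : ℝ≥0∞) ≠ ⊤ := ENNReal.natCast_ne_top _
  have h2z : ∀ i : ℕ, ((2:ℝ≥0∞) ^ i) ≠ 0 := fun i => pow_ne_zero _ two_ne_zero
  have h2t : ∀ i : ℕ, ((2:ℝ≥0∞) ^ i) ≠ ⊤ := fun i => ENNReal.pow_ne_top ENNReal.ofNat_ne_top
  rw [Xset, ← hS, Finset.sum_insert hnm, Finset.sum_image hinj]
  have hterm : ∀ i ∈ S, ((binInv (p ++ List.replicate i false) : ℝ≥0∞))⁻¹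
      = (2 : ℝ≥0∞)⁻¹ ^ i * ((binInv p : ℝ≥0∞))⁻¹ := by
    intro i hi
    rw [binInv_append_replicate]
    push_cast
    rw [ENNReal.mul_inv (Or.inl (h2z i)) (Or.inl (h2t i)), ← ENNReal.inv_pow]
  rw [Finset.sum_congr rfl hterm, ← Finset.sum_mul]
  have key : (binInv p : ℝ≥0∞) = 2 ^ p.length * (1 + ∑ i ∈ S, (2 : ℝ≥0∞)⁻¹ ^ i) := by
    have hspec := binInv_spec p
    rw [← hS] at hspec
    rw [hspec]
    push_cast
    rw [mul_add, mul_one, Finset.mul_sum]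
    congr 1
    refine Finset.sum_congr rfl fun i hi => ?_
    rw [hS, Finset.mem_filter, Finset.mem_Icc] at hi
    have hpow : (2:ℝ≥0∞) ^ p.length = 2 ^ (p.length - i) * 2 ^ i := by
      rw [← pow_add]; congr 1; omega
    rw [hpow, mul_assoc, ← ENNReal.inv_pow, ENNReal.mul_inv_cancel (h2z i) (h2t i), mul_one]
  set T := 1 + ∑ i ∈ S, (2 : ℝ≥0∞)⁻¹ ^ i with hT
  have hT0 : T ≠ 0 := by
    rw [hT]; intro h
    have : (1:ℝ≥0∞) ≤ 1 + ∑ i ∈ S, (2 : ℝ≥0∞)⁻¹ ^ i := le_self_add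
    rw [h] at this; simp at this
  have hTt : T ≠ ⊤ := by
    rw [hT]
    refine ENNReal.add_ne_top.mpr ⟨ENNReal.one_ne_top, ?_⟩
    refine (ENNReal.sum_lt_top.mpr fun i _ => ?_).ne
    rw [← ENNReal.inv_pow]
    exact ENNReal.inv_lt_top.mpr (by positivity)
  have step1 : (binInv p : ℝ≥0∞)⁻¹ + (∑ i ∈ S, (2:ℝ≥0∞)⁻¹ ^ i) * (binInv p : ℝ≥0∞)⁻¹
      = T * (binInv p : ℝ≥0∞)⁻¹ := by
    rw [hT, add_mul, one_mul]
  rw [step1, key, ENNReal.mul_inv (Or.inl (h2z p.length)) (Or.inl (h2t p.length)),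
    ← mul_assoc, mul_comm T, mul_assoc, ENNReal.mul_inv_cancel hT0 hTt, mul_one,
    ← ENNReal.inv_pow]

lemma kraft_finset : ∀ (n : ℕ) (F : Finset (List Bool)),
    (∀ p ∈ F, p.length ≤ n) → (∀ p ∈ F, ∀ q ∈ F, p <+: q → p = q) →
    ∑ p ∈ F, (2 : ℝ≥0∞)⁻¹ ^ p.length ≤ 1 := by
  intro n
  induction n with
  | zero =>
      intro F hlen hpf
      have : F ⊆ {[]} := by
        intro p hp
        have := hlen p hp
        simp only [Finset.mem_singleton]
        exact List.length_eq_zero_iff.mp (by omega)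
      calc ∑ p ∈ F, (2 : ℝ≥0∞)⁻¹ ^ p.length
          ≤ ∑ p ∈ ({[]} : Finset (List Bool)), (2 : ℝ≥0∞)⁻¹ ^ p.length :=
            Finset.sum_le_sum_of_subset this
        _ = 1 := by simp
  | succ n ih =>
      intro F hlen hpf
      by_cases hnil : ([] : List Bool) ∈ F
      · have : F ⊆ {[]} := by
          intro p hp
          simp only [Finset.mem_singleton]
          exact (hpf [] hnil p hp List.nil_prefix).symm
        calc ∑ p ∈ F, (2 : ℝ≥0∞)⁻¹ ^ p.length
            ≤ ∑ p ∈ ({[]} : Finset (List Bool)), (2 : ℝ≥0∞)⁻¹ ^ p.length :=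
              Finset.sum_le_sum_of_subset this
          _ = 1 := by simp
      · classical
        have hsum : ∀ b : Bool,
            ∑ p ∈ F.filter (fun p => p.head? = some b), (2 : ℝ≥0∞)⁻¹ ^ p.length
              ≤ 2⁻¹ := by
          intro b
          set Fb := (F.filter (fun p => p.head? = some b)).image List.tail with hFb
          have hmem : ∀ p ∈ F.filter (fun p => p.head? = some b), p = b :: p.tail := by
            intro p hp
            rw [Finset.mem_filter] at hp
            cases p with
            | nil => simp at hp
            | cons a t => simp at hp; rw [← hp.2]; simp
          have hinj : Set.InjOn List.tail
              ((F.filter (fun p => p.head? = some b)) : Set (List Bool)) := by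
            intro p hp q hq h
            rw [hmem p hp, hmem q hq, h]
          have h1 : ∑ p ∈ F.filter (fun p => p.head? = some b), (2 : ℝ≥0∞)⁻¹ ^ p.length
              = ∑ t ∈ Fb, (2 : ℝ≥0∞)⁻¹ ^ (t.length + 1) := by
            rw [hFb, Finset.sum_image hinj]
            refine Finset.sum_congr rfl fun p hp => ?_
            congr 1
            conv_lhs => rw [hmem p hp]
            simp
          have h2 : ∑ t ∈ Fb, (2 : ℝ≥0∞)⁻¹ ^ (t.length + 1)
              = 2⁻¹ * ∑ t ∈ Fb, (2 : ℝ≥0∞)⁻¹ ^ t.length := by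
            rw [Finset.mul_sum]
            exact Finset.sum_congr rfl fun t _ => by rw [pow_succ, mul_comm]
          have hIH : ∑ t ∈ Fb, (2 : ℝ≥0∞)⁻¹ ^ t.length ≤ 1 := by
            refine ih Fb ?_ ?_
            · intro t ht
              rw [hFb] at ht
              obtain ⟨p, hp, rfl⟩ := Finset.mem_image.mp ht
              have := hlen p (Finset.mem_filter.mp hp).1
              have hne : p ≠ [] := by
                intro h; rw [h] at hp; simp [Finset.mem_filter] at hp
              have : p.tail.length = p.length - 1 := by simp
              omega
            · intro t ht u hu htu
              rw [hFb] at ht hu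
              obtain ⟨p, hp, rfl⟩ := Finset.mem_image.mp ht
              obtain ⟨q, hq, rfl⟩ := Finset.mem_image.mp hu
              have hp' := hmem p hp
              have hq' := hmem q hq
              have hpq : p <+: q := by
                rw [hp', hq']
                exact List.cons_prefix_cons.mpr ⟨rfl, htu⟩
              have := hpf p (Finset.mem_filter.mp hp).1 q (Finset.mem_filter.mp hq).1 hpq
              rw [this]
          rw [h1, h2]
          calc 2⁻¹ * ∑ t ∈ Fb, (2 : ℝ≥0∞)⁻¹ ^ t.length ≤ 2⁻¹ * 1 :=
                mul_le_mul_right hIH _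
            _ = 2⁻¹ := mul_one _
        have hsplit : ∑ p ∈ F, (2 : ℝ≥0∞)⁻¹ ^ p.length
            = ∑ p ∈ F.filter (fun p => p.head? = some false), (2 : ℝ≥0∞)⁻¹ ^ p.length
              + ∑ p ∈ F.filter (fun p => p.head? = some true), (2 : ℝ≥0∞)⁻¹ ^ p.length := by
          rw [← Finset.sum_filter_add_sum_filter_not F (fun p => p.head? = some false)]
          congr 1
          refine Finset.sum_congr (Finset.filter_congr fun p hp => ?_) fun _ _ => rfl
          have hne : p ≠ [] := fun h => hnil (h ▸ hp)
          cases p with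
          | nil => simp at hne
          | cons a t => cases a <;> simp
        rw [hsplit]
        calc _ ≤ (2:ℝ≥0∞)⁻¹ + 2⁻¹ := add_le_add (hsum false) (hsum true)
          _ = 1 := ENNReal.inv_two_add_inv_two

def stripM (q : List Bool) (i : ℕ) : List Bool :=
  (List.range (q.length - i)).map (fun j => q.getD j false)

def okB (q : List Bool) (i : ℕ) : Bool :=
  (decide (i = 0)) || ((decide (i + i ≤ q.length))
    && (decide (stripM q i ++ List.replicate i false = q)) && q.getD (i-1) false)

lemma stripM_eq_take (q : List Bool) (i : ℕ) : stripM q i = q.take (q.length - i) := by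
  apply List.ext_getElem
  · simp [stripM]
  · intro j h1 h2
    simp only [stripM, List.length_map, List.length_range] at h1
    simp only [stripM, List.getElem_map, List.getElem_range, List.getElem_take]
    rw [List.getD_eq_getElem _ _ (by omega)]

lemma stripM_zero (q : List Bool) : stripM q 0 = q := by
  rw [stripM_eq_take]; simp

lemma hrep : Primrec (fun i => List.replicate i false) := by
  have := Primrec.list_map Primrec.list_range ((Primrec.const false).comp Primrec.fst).to₂
  refine this.of_eq fun i => ?_
  simp [List.map_const']

lemma hstrip : Primrec₂ stripM := by
  have hg : Primrec₂ (fun (x : List Bool × ℕ) (j : ℕ) => x.1.getD j false) :=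
    (Primrec.list_getD false).comp (Primrec.fst.comp Primrec.fst) Primrec.snd
  have := Primrec.list_map
    (Primrec.list_range.comp (Primrec.nat_sub.comp (Primrec.list_length.comp Primrec.fst)
      Primrec.snd)) hg
  exact this

lemma hok : Primrec₂ okB := by
  have c1 : Primrec fun x : List Bool × ℕ => decide (x.2 = 0) :=
    (Primrec.eq.comp Primrec.snd (Primrec.const 0)).decide
  have c2 : Primrec fun x : List Bool × ℕ => decide (x.2 + x.2 ≤ x.1.length) :=
    (Primrec.nat_le.comp (Primrec.nat_add.comp Primrec.snd Primrec.snd)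
      (Primrec.list_length.comp Primrec.fst)).decide
  have c3 : Primrec fun x : List Bool × ℕ =>
      decide (stripM x.1 x.2 ++ List.replicate x.2 false = x.1) :=
    (Primrec.eq.comp (Primrec.list_append.comp hstrip (hrep.comp Primrec.snd)) Primrec.fst).decide
  have c4 : Primrec fun x : List Bool × ℕ => x.1.getD (x.2 - 1) false :=
    (Primrec.list_getD false).comp Primrec.fst (Primrec.nat_sub.comp Primrec.snd (Primrec.const 1))
  have hand := Primrec.dom_bool₂ (· && ·)
  have hor := Primrec.dom_bool₂ (· || ·)
  exact hor.comp c1 (hand.comp (hand.comp c2 c3) c4)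


/-- Given a self-delimiting machine `C`, there is a tuatara machine `V` with
`dom(V) = ⋃_{p ∈ dom C} X(p)` and `ζ_V = Ω_C`; the sets `X(p)` are pairwise
disjoint, `X(p)` has `HW(p)+1` elements, and
`∑_{x ∈ X(p)} 1/bin⁻¹(x) = 2^{-|p|}` for each `p ∈ dom C`. -/
theorem stmt_8 (C : List Bool →. List Bool) (hC : Partrec C) (hsd : SelfDelim C) :
    ∃ V : List Bool →. List Bool, Partrec V ∧ zeta V ≤ 1 ∧
      dom V = ⋃ p ∈ dom C, (Xset p : Set (List Bool)) ∧
      zeta V = Omega C ∧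
      dom C ⊆ dom V ∧
      (∀ p ∈ dom C, ∀ q ∈ dom C, p ≠ q → Disjoint (Xset p) (Xset q)) ∧
      (∀ p ∈ dom C, (Xset p).card = p.count true + 1) ∧
      (∀ p ∈ dom C,
        ∑ x ∈ Xset p, ((binInv x : ℝ≥0∞))⁻¹ = (2 : ℝ≥0∞)⁻¹ ^ p.length) := by
  classical
  obtain ⟨c, ec⟩ := Nat.Partrec.Code.exists_code.1 hC
  set B : List Bool → ℕ → Bool := fun q n =>
    okB q n.unpair.1 && (evaln n.unpair.2 c (Encodable.encode (stripM q n.unpair.1))).isSome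
    with hBdef
  have hB : Primrec₂ B := by
    have hi : Primrec fun x : List Bool × ℕ => x.2.unpair.1 :=
      Primrec.fst.comp (Primrec.unpair.comp Primrec.snd)
    have hk : Primrec fun x : List Bool × ℕ => x.2.unpair.2 :=
      Primrec.snd.comp (Primrec.unpair.comp Primrec.snd)
    have hokx : Primrec fun x : List Bool × ℕ => okB x.1 x.2.unpair.1 :=
      hok.comp Primrec.fst hi
    have hstr : Primrec fun x : List Bool × ℕ => stripM x.1 x.2.unpair.1 :=
      hstrip.comp Primrec.fst hi
    have hev : Primrec fun x : List Bool × ℕ =>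
        (evaln x.2.unpair.2 c (Encodable.encode (stripM x.1 x.2.unpair.1))).isSome :=
      Primrec.option_isSome.comp (primrec_evaln.comp
        ((hk.pair (Primrec.const c)).pair (Primrec.encode.comp hstr)))
    exact (Primrec.dom_bool₂ (· && ·)).comp hokx hev
  set V : List Bool →. List Bool := fun q =>
    (Nat.rfind fun n => Part.some (B q n)).map fun _ => ([] : List Bool) with hVdef
  have hV : Partrec V :=
    Partrec.map (Partrec.rfind hB.to_comp.partrec₂) (Computable.const ([] : List Bool)).to₂
  have hDom : ∀ q, (V q).Dom ↔ ∃ n, B q n = true := by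
    intro q
    show (Part.map _ _).Dom ↔ _
    rw [Part.map_Dom]
    refine Nat.rfind_dom.trans ?_
    constructor
    · rintro ⟨n, hn, -⟩
      exact ⟨n, (Part.mem_some_iff.mp hn).symm⟩
    · rintro ⟨n, hn⟩
      exact ⟨n, Part.mem_some_iff.mpr hn.symm, fun _ => trivial⟩
  have hCeval : ∀ w : List Bool, c.eval (Encodable.encode w)
      = (C w).map Encodable.encode := by
    intro w
    rw [ec]
    simp [Encodable.encodek]
  have hCDom : ∀ w : List Bool,
      (C w).Dom ↔ ∃ k, (evaln k c (Encodable.encode w)).isSome := by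
    intro w
    constructor
    · intro h
      have hx : Encodable.encode ((C w).get h) ∈ c.eval (Encodable.encode w) := by
        rw [hCeval]
        exact Part.mem_map _ (Part.get_mem h)
      obtain ⟨k, hk⟩ := evaln_complete.mp hx
      exact ⟨k, Option.isSome_iff_exists.mpr ⟨_, hk⟩⟩
    · rintro ⟨k, hk⟩
      obtain ⟨x, hx⟩ := Option.isSome_iff_exists.mp hk
      have hmem : x ∈ c.eval (Encodable.encode w) := evaln_complete.mpr ⟨k, hx⟩
      rw [hCeval] at hmem
      obtain ⟨y, hy, -⟩ := Part.mem_map_iff _ |>.mp hmem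
      exact Part.dom_iff_mem.mpr ⟨_, hy⟩
  -- the key characterization of the domain of V
  have hkey : ∀ q, (V q).Dom ↔ ∃ p, (C p).Dom ∧ q ∈ Xset p := by
    intro q
    rw [hDom q]
    constructor
    · rintro ⟨n, hn⟩
      simp only [hBdef, Bool.and_eq_true] at hn
      obtain ⟨h1, h2⟩ := hn
      have hCd : (C (stripM q n.unpair.1)).Dom := (hCDom _).mpr ⟨n.unpair.2, h2⟩
      by_cases hi0 : n.unpair.1 = 0
      · rw [hi0, stripM_zero] at hCd
        exact ⟨q, hCd, self_mem_Xset q⟩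
      · simp only [okB, hi0, decide_false, Bool.false_or, Bool.and_eq_true,
          decide_eq_true_eq] at h1
        obtain ⟨⟨hle, heq⟩, hbit⟩ := h1
        set i := n.unpair.1
        set p := stripM q i with hp
        have hlen : p.length + i = q.length := by
          have := congrArg List.length heq
          simpa using this
        have hi1 : 1 ≤ i := Nat.one_le_iff_ne_zero.mpr hi0
        have hip : i ≤ p.length := by omega
        have hbit' : p.getD (i - 1) false = true := by
          rw [← heq, List.getD_append _ _ _ _ (by omega)] at hbit
          exact hbit
        exact ⟨p, hCd, mem_Xset.mpr ⟨i, heq.symm, Or.inr ⟨hi1, hip, hbit'⟩⟩⟩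
    · rintro ⟨p, hpD, hq⟩
      obtain ⟨i, rfl, hcond⟩ := mem_Xset.mp hq
      obtain ⟨k, hk⟩ := (hCDom p).mp hpD
      rcases hcond with rfl | ⟨h1, h2, h3⟩
      · refine ⟨Nat.pair 0 k, ?_⟩
        simp only [hBdef, Nat.unpair_pair, Bool.and_eq_true]
        constructor
        · simp [okB]
        · rw [stripM_zero]
          simpa using hk
      · refine ⟨Nat.pair i k, ?_⟩
        have hstr : stripM (p ++ List.replicate i false) i = p := by
          have hl : (p ++ List.replicate i false).length - i = p.length := by simp
          rw [stripM_eq_take, hl, List.take_left]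
        have hbit : (p ++ List.replicate i false).getD (i - 1) false = true := by
          rw [List.getD_append _ _ _ _ (by omega)]
          exact h3
        simp only [hBdef, Nat.unpair_pair, Bool.and_eq_true]
        constructor
        · simp only [okB, Bool.or_eq_true, Bool.and_eq_true, decide_eq_true_eq]
          refine Or.inr ⟨⟨?_, ?_⟩, hbit⟩
          · simp; omega
          · rw [hstr]
        · rw [hstr]
          simpa using hk
  have hdomV : dom V = ⋃ p ∈ dom C, (Xset p : Set (List Bool)) := by
    ext q
    simp only [dom, Set.mem_setOf_eq, Set.mem_iUnion, Finset.mem_coe, exists_prop]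
    exact hkey q
  -- disjointness
  have hdisj : ∀ p ∈ dom C, ∀ q ∈ dom C, p ≠ q → Disjoint (Xset p) (Xset q) := by
    intro p hp q hq hne
    exact Xset_disjoint (fun h => hne (hsd p hp q hq h))
      (fun h => hne ((hsd q hq p hp h).symm))
  -- Omega C ≤ 1 via Kraft
  have hOmega_le : Omega C ≤ 1 := by
    rw [Omega, ENNReal.tsum_eq_iSup_sum]
    refine iSup_le fun s => ?_
    have hinj : Set.InjOn (fun p : dom C => (p : List Bool)) s := by
      intro a _ b _ h
      exact Subtype.ext h
    set F := s.image (fun p : dom C => (p : List Bool)) with hF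
    have himg : ∑ p ∈ F, (2:ℝ≥0∞)⁻¹ ^ p.length
        = ∑ p ∈ s, (2:ℝ≥0∞)⁻¹ ^ (p : List Bool).length := Finset.sum_image hinj
    rw [← himg]
    refine kraft_finset (F.sup List.length) F (fun p hp => Finset.le_sup hp) ?_
    intro p hp q hq hpq
    rw [hF, Finset.mem_image] at hp hq
    obtain ⟨⟨p', hp'⟩, -, rfl⟩ := hp
    obtain ⟨⟨q', hq'⟩, -, rfl⟩ := hq
    exact hsd _ hp' _ hq' hpq
  -- zeta V = Omega C
  have hzeta : zeta V = Omega C := by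
    rw [zeta, Omega]
    let e : ↥(dom V) ≃ ↥(Ups (dom V)) :=
      { toFun := fun w => ⟨binInv w.1, one_le_binInv _, by rw [bin_binInv]; exact w.2⟩
        invFun := fun n => ⟨bin n.1, n.2.2⟩
        left_inv := fun w => Subtype.ext (bin_binInv _)
        right_inv := fun n => Subtype.ext (binInv_bin n.2.1) }
    have h1 : ∑' (n : Ups (dom V)), ((n : ℕ) : ℝ≥0∞)⁻¹
        = ∑' (w : dom V), ((binInv (w : List Bool) : ℕ) : ℝ≥0∞)⁻¹ :=
      ((e.tsum_eq (fun n : Ups (dom V) => ((n : ℕ) : ℝ≥0∞)⁻¹)).symm).trans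
        (tsum_congr fun w => rfl)
    rw [h1]
    have hd : Pairwise (Function.onFun Disjoint fun p : ↥(dom C) =>
        ((Xset (p : List Bool) : Finset (List Bool)) : Set (List Bool))) := by
      intro p q hpq
      have hne : (p : List Bool) ≠ (q : List Bool) := fun h => hpq (Subtype.ext h)
      exact Finset.disjoint_coe.mpr (hdisj _ p.2 _ q.2 hne)
    have hrw : dom V = ⋃ (p : ↥(dom C)),
        ((Xset (p : List Bool) : Finset (List Bool)) : Set (List Bool)) := by
      rw [hdomV, Set.biUnion_eq_iUnion]
    rw [hrw]
    let un := Set.unionEqSigmaOfDisjoint hd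
    have h2 : ∑' (w : ⋃ (p : ↥(dom C)),
          ((Xset (p : List Bool) : Finset (List Bool)) : Set (List Bool))),
          ((binInv (w : List Bool) : ℕ) : ℝ≥0∞)⁻¹
        = ∑' (x : Σ p : ↥(dom C),
            ↥((Xset (p : List Bool) : Finset (List Bool)) : Set (List Bool))),
          ((binInv (x.2 : List Bool) : ℕ) : ℝ≥0∞)⁻¹ := by
      refine (Equiv.tsum_eq un.symm
        (fun w => ((binInv (w : List Bool) : ℕ) : ℝ≥0∞)⁻¹)).symm.trans ?_
      exact tsum_congr fun x => rfl
    rw [h2, ENNReal.tsum_sigma']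
    refine tsum_congr fun p => ?_
    have h3 : ∑' (x : ↥((Xset (p : List Bool) : Finset (List Bool)) : Set (List Bool))),
        ((binInv (x : List Bool) : ℕ) : ℝ≥0∞)⁻¹
        = ∑ x ∈ Xset (p : List Bool), ((binInv x : ℕ) : ℝ≥0∞)⁻¹ :=
      Finset.tsum_subtype _ (fun x => ((binInv x : ℕ) : ℝ≥0∞)⁻¹)
    rw [h3, Xsum]
  refine ⟨V, hV, by rw [hzeta]; exact hOmega_le, hdomV, hzeta, ?_, hdisj,
    fun p _ => Xset_card p, fun p _ => Xsum p⟩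
  intro p hp
  rw [hdomV]
  exact Set.mem_biUnion hp (self_mem_Xset p)
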